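/- If x, y, e are vectors in a complex inner product space with ‖e‖ = 1, then |⟨x, e⟩ ⟨e, y⟩| ≤ (1/2)(‖x‖ ‖y‖ + |⟨x, y⟩|). -/
import Mathlib

open scoped InnerProductSpace

/-- Buzano's inequality. -/
theorem stmt_1 {H : Type*} [NormedAddCommGroup H] [InnerProductSpace ℂ H]
    (x y e : H) (he : ‖e‖ = 1) :
    ‖⟪x, e⟫_ℂ * ⟪e, y⟫_ℂ‖ ≤ (1 / 2) * (‖x‖ * ‖y‖ + ‖⟪x, y⟫_ℂ‖) := by
  set z : H := (2 * ⟪e, y⟫_ℂ) • e - y with hz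
  have hzn : ‖z‖ = ‖y‖ := by
    have h2 : ‖z‖ ^ 2 = ‖y‖ ^ 2 := by
      have hns := norm_sub_sq (𝕜 := ℂ) ((2 * ⟪e, y⟫_ℂ) • e) y
      rw [← hz, norm_smul, inner_smul_left, he, mul_one] at hns
      have hre : RCLike.re ((starRingEnd ℂ) (2 * ⟪e, y⟫_ℂ) * ⟪e, y⟫_ℂ)
          = 2 * ‖⟪e, y⟫_ℂ‖ ^ 2 := by
        have hc : (starRingEnd ℂ) (2 * ⟪e, y⟫_ℂ) * ⟪e, y⟫_ℂ
            = (RCLike.ofReal (2 * ‖⟪e, y⟫_ℂ‖ ^ 2) : ℂ) := by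
          rw [map_mul, mul_assoc, RCLike.conj_mul, Complex.conj_ofNat,
            RCLike.ofReal_mul, RCLike.ofReal_ofNat, RCLike.ofReal_pow]
        rw [hc, RCLike.ofReal_re]
      rw [hre] at hns
      have hn2 : ‖(2:ℂ) * ⟪e, y⟫_ℂ‖ = 2 * ‖⟪e, y⟫_ℂ‖ := by
        rw [norm_mul]; norm_num
      rw [hn2] at hns
      rw [hns]; ring
    have h1 : (0:ℝ) ≤ ‖z‖ := norm_nonneg _
    have h2' : (0:ℝ) ≤ ‖y‖ := norm_nonneg _
    nlinarith
  have hcs : ‖⟪x, z⟫_ℂ‖ ≤ ‖x‖ * ‖y‖ := by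
    calc ‖⟪x, z⟫_ℂ‖ ≤ ‖x‖ * ‖z‖ := norm_inner_le_norm x z
    _ = ‖x‖ * ‖y‖ := by rw [hzn]
  have hinner : ⟪x, z⟫_ℂ = 2 * (⟪x, e⟫_ℂ * ⟪e, y⟫_ℂ) - ⟪x, y⟫_ℂ := by
    rw [hz, inner_sub_right, inner_smul_right]
    ring
  have h1 : ‖2 * (⟪x, e⟫_ℂ * ⟪e, y⟫_ℂ)‖ ≤ ‖⟪x, z⟫_ℂ‖ + ‖⟪x, y⟫_ℂ‖ := by
    rw [hinner]
    calc ‖2 * (⟪x, e⟫_ℂ * ⟪e, y⟫_ℂ)‖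
        = ‖(2 * (⟪x, e⟫_ℂ * ⟪e, y⟫_ℂ) - ⟪x, y⟫_ℂ) + ⟪x, y⟫_ℂ‖ := by ring_nf
      _ ≤ ‖2 * (⟪x, e⟫_ℂ * ⟪e, y⟫_ℂ) - ⟪x, y⟫_ℂ‖ + ‖⟪x, y⟫_ℂ‖ := norm_add_le _ _
  have h2 : ‖2 * (⟪x, e⟫_ℂ * ⟪e, y⟫_ℂ)‖ = 2 * ‖⟪x, e⟫_ℂ * ⟪e, y⟫_ℂ‖ := by
    rw [norm_mul]; norm_num
  rw [h2] at h1
  linarith
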